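/- Let X ⊆ ℝ^d be a sequence-form strategy polytope (defined by x(∅)=1, x(p_j)=Σ_{a∈A_j} x(ja) for each decision point j, and x ≥ 0). Then for every linear map f : ℝ^d → ℝ that is nonnegative on X, there exists a unique vector c ∈ ℝ^d such that (1) f(x) = ⟨c, x⟩ for all x ∈ X, (2) c has all nonnegative entries, and (3) for every decision point j there is at least one action a ∈ A_j with c(ja) = 0. -/

import Mathlib

/-- A tree-form decision problem: sequences `Seq` (observation points, with root `∅`),
decision points `Dp`, where `seqs j` is the set of sequences `ja` for actions `a ∈ A_j`,
`parentSeq j = p_j`, `parentDp σ` the decision point immediately preceding `σ` (none for the root),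
`children σ = C_σ`, and `depth` counts the number of decision points above a sequence. -/
structure TFDP where
  Seq : Type
  Dp : Type
  [finSeq : Fintype Seq]
  [decSeq : DecidableEq Seq]
  [finDp : Fintype Dp]
  [decDp : DecidableEq Dp]
  root : Seq
  seqs : Dp → Finset Seq
  parentSeq : Dp → Seq
  parentDp : Seq → Option Dp
  children : Seq → Finset Dp
  depth : Seq → ℕ
  seqs_nonempty : ∀ j, (seqs j).Nonempty
  mem_children : ∀ σ j, j ∈ children σ ↔ parentSeq j = σ
  parentDp_spec : ∀ σ j, parentDp σ = some j ↔ σ ∈ seqs j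
  parentDp_root : parentDp root = none
  depth_root : depth root = 0
  depth_seq : ∀ j, ∀ σ ∈ seqs j, depth σ = depth (parentSeq j) + 1

attribute [instance] TFDP.finSeq TFDP.decSeq TFDP.finDp TFDP.decDp

namespace TFDP

variable (T : TFDP)

/-- The sequence-form polytope `co X`. -/
def poly : Set (T.Seq → ℝ) :=
  {x | (∀ σ, 0 ≤ x σ) ∧ x T.root = 1 ∧ ∀ j, x (T.parentSeq j) = ∑ σ ∈ T.seqs j, x σ}

/-- The pure (0/1) sequence-form strategies `X`. -/
def pureStrats : Set (T.Seq → ℝ) :=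
  {x ∈ T.poly | ∀ σ, x σ = 0 ∨ x σ = 1}

/-- Matrix-vector multiplication for `Seq × Seq` matrices. -/
def mulVec (A : T.Seq → T.Seq → ℝ) (x : T.Seq → ℝ) : T.Seq → ℝ :=
  fun σ => ∑ σ' : T.Seq, A σ σ' * x σ'

/-- `B(j, p_σ)`, with the convention `B(j, p_∅) := 0`. -/
def Bp (B : T.Dp → T.Dp → ℝ) (j : T.Dp) (σ : T.Seq) : ℝ :=
  (T.parentDp σ).elim 0 (B j)

/-- The UTC constraint system for a pair `(A, B)`. -/
def UTC (A : T.Seq → T.Seq → ℝ) (B : T.Dp → T.Dp → ℝ) : Prop :=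
  (∀ (j : T.Dp) (σ' : T.Seq),
      A (T.parentSeq j) σ' + T.Bp B j σ'
        = (∑ σ ∈ T.seqs j, A σ σ') + ∑ j' ∈ T.children σ', B j j')
  ∧ A T.root T.root = 1
  ∧ (∀ σ', σ' ≠ T.root → A T.root σ' = 0)
  ∧ (∀ σ σ', 0 ≤ A σ σ')
  ∧ (∀ j j', 0 ≤ B j j')

end TFDP

namespace TFDP

open Finset

variable (T : TFDP)

noncomputable def bigN : ℕ := Finset.univ.sup T.depth

variable {T}

lemma depth_le_bigN (σ : T.Seq) : T.depth σ ≤ T.bigN := Finset.le_sup (Finset.mem_univ σ)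

lemma depth_in_seqs {j : T.Dp} {τ : T.Seq} (h : τ ∈ T.seqs j) :
    T.depth τ = T.depth (T.parentSeq j) + 1 := T.depth_seq j τ h

lemma depth_child {σ : T.Seq} {j : T.Dp} (hj : j ∈ T.children σ) {τ : T.Seq}
    (hτ : τ ∈ T.seqs j) : T.depth τ = T.depth σ + 1 := by
  rw [T.depth_seq j τ hτ, (T.mem_children σ j).1 hj]

lemma children_eq_empty {σ : T.Seq} (h : T.bigN ≤ T.depth σ) : T.children σ = ∅ := by
  by_contra hne
  obtain ⟨j, hj⟩ := Finset.nonempty_iff_ne_empty.2 hne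
  obtain ⟨τ, hτ⟩ := T.seqs_nonempty j
  have h1 := depth_child hj hτ
  have h2 := depth_le_bigN τ
  omega

lemma root_not_mem_seqs (j : T.Dp) : T.root ∉ T.seqs j := by
  intro h
  have := (T.parentDp_spec T.root j).2 h
  rw [T.parentDp_root] at this
  cases this

lemma not_mem_seqs_of_parentDp_none {ρ : T.Seq} (h : T.parentDp ρ = none) (j : T.Dp) :
    ρ ∉ T.seqs j := by
  intro hm
  have := (T.parentDp_spec ρ j).2 hm
  rw [h] at this
  cases this

lemma mem_seqs_iff {τ : T.Seq} {j j' : T.Dp} (h : τ ∈ T.seqs j) : τ ∈ T.seqs j' ↔ j' = j := by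
  constructor
  · intro h'
    have h1 := (T.parentDp_spec τ j).2 h
    have h2 := (T.parentDp_spec τ j').2 h'
    rw [h1] at h2
    exact (Option.some_injective _ h2.symm)
  · rintro rfl; exact h

variable (T)

noncomputable def yAux (s : T.Dp → T.Seq) : ℕ → T.Seq → T.Seq → ℝ
  | 0, σ => Pi.single σ 1
  | n+1, σ => Pi.single σ 1 + ∑ j ∈ T.children σ, yAux s n (s j)

lemma yAux_zero (s : T.Dp → T.Seq) (σ : T.Seq) : T.yAux s 0 σ = Pi.single σ 1 := rfl

lemma yAux_succ_def (s : T.Dp → T.Seq) (n : ℕ) (σ : T.Seq) :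
    T.yAux s (n+1) σ = Pi.single σ 1 + ∑ j ∈ T.children σ, T.yAux s n (s j) := rfl

noncomputable def Y (s : T.Dp → T.Seq) (σ : T.Seq) : T.Seq → ℝ := T.yAux s T.bigN σ

variable {T}

/-- A valid selection. -/
def Valid (s : T.Dp → T.Seq) : Prop := ∀ j, s j ∈ T.seqs j

variable {s : T.Dp → T.Seq}

lemma depth_sel (hs : Valid s) {σ : T.Seq} {j : T.Dp} (hj : j ∈ T.children σ) :
    T.depth (s j) = T.depth σ + 1 := depth_child hj (hs j)

lemma yAux_succ (hs : Valid s) : ∀ n (σ : T.Seq), T.bigN ≤ T.depth σ + n →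
    T.yAux s (n+1) σ = T.yAux s n σ := by
  intro n
  induction n with
  | zero =>
    intro σ h
    rw [yAux_succ_def, yAux_zero, children_eq_empty (by omega), Finset.sum_empty, add_zero]
  | succ n ih =>
    intro σ h
    rw [yAux_succ_def, yAux_succ_def]
    congr 1
    refine Finset.sum_congr rfl fun j hj => ih (s j) ?_
    rw [depth_sel hs hj]; omega

lemma yAux_eq_Y (hs : Valid s) : ∀ n (σ : T.Seq), T.bigN ≤ T.depth σ + n →
    T.yAux s n σ = T.Y s σ := by
  have climb : ∀ k n (σ : T.Seq), T.bigN ≤ T.depth σ + n → T.yAux s (n+k) σ = T.yAux s n σ := by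
    intro k
    induction k with
    | zero => intro n σ h; rfl
    | succ k ih =>
      intro n σ h
      have : n + (k+1) = (n+k) + 1 := by omega
      rw [this, yAux_succ hs _ _ (by omega), ih n σ h]
  intro n σ h
  have h1 : T.yAux s (n + T.bigN) σ = T.yAux s n σ := climb _ _ _ h
  have h2 : T.yAux s (T.bigN + n) σ = T.yAux s T.bigN σ :=
    climb _ _ _ (by have := depth_le_bigN σ; omega)
  rw [Y, ← h2, show T.bigN + n = n + T.bigN by omega, h1]

lemma Y_rec (hs : Valid s) (σ : T.Seq) :
    T.Y s σ = Pi.single σ 1 + ∑ j ∈ T.children σ, T.Y s (s j) := by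
  have h1 : T.yAux s (T.bigN + 1) σ = T.Y s σ :=
    yAux_eq_Y hs _ _ (by have := depth_le_bigN σ; omega)
  rw [← h1, yAux_succ_def]
  rfl

lemma yAux_nonneg (hs : Valid s) : ∀ n (σ τ : T.Seq), 0 ≤ T.yAux s n σ τ := by
  intro n
  induction n with
  | zero =>
    intro σ τ
    rw [yAux_zero, Pi.single_apply]
    split <;> norm_num
  | succ n ih =>
    intro σ τ
    rw [yAux_succ_def]
    have h1 : (0:ℝ) ≤ (Pi.single σ 1 : T.Seq → ℝ) τ := by rw [Pi.single_apply]; split <;> norm_num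
    have h2 : (0:ℝ) ≤ ∑ j ∈ T.children σ, T.yAux s n (s j) τ :=
      Finset.sum_nonneg fun j _ => ih _ _
    simp only [Pi.add_apply, Finset.sum_apply]
    linarith

lemma Y_nonneg (hs : Valid s) (σ τ : T.Seq) : 0 ≤ T.Y s σ τ := yAux_nonneg hs _ _ _

end TFDP
namespace TFDP

open Finset

variable {T : TFDP} {s : T.Dp → T.Seq}

lemma yAux_support (hs : Valid s) : ∀ n (σ τ : T.Seq), T.depth τ < T.depth σ →
    T.yAux s n σ τ = 0 := by
  intro n
  induction n with
  | zero =>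
    intro σ τ h
    rw [yAux_zero, Pi.single_apply, if_neg]
    rintro rfl; omega
  | succ n ih =>
    intro σ τ h
    rw [yAux_succ_def]
    simp only [Pi.add_apply, Finset.sum_apply]
    rw [Pi.single_apply, if_neg (by rintro rfl; omega)]
    rw [zero_add]
    refine Finset.sum_eq_zero fun j hj => ih _ _ ?_
    rw [depth_sel hs hj]; omega

lemma Y_support (hs : Valid s) (σ τ : T.Seq) (h : T.depth τ < T.depth σ) :
    T.Y s σ τ = 0 := yAux_support hs _ _ _ h

lemma yAux_self (hs : Valid s) : ∀ n (σ : T.Seq), T.yAux s n σ σ = 1 := by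
  intro n
  induction n with
  | zero => intro σ; rw [yAux_zero, Pi.single_apply, if_pos rfl]
  | succ n ih =>
    intro σ
    rw [yAux_succ_def]
    simp only [Pi.add_apply, Finset.sum_apply]
    rw [Pi.single_apply, if_pos rfl]
    rw [Finset.sum_eq_zero (fun j hj => yAux_support hs n (s j) σ (by rw [depth_sel hs hj]; omega)), add_zero]

lemma Y_self (hs : Valid s) (σ : T.Seq) : T.Y s σ σ = 1 := yAux_self hs _ _

lemma yAux_orphan (hs : Valid s) {ρ : T.Seq} (hρ : T.parentDp ρ = none) :
    ∀ n (σ : T.Seq), T.yAux s n σ ρ = if σ = ρ then 1 else 0 := by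
  intro n
  induction n with
  | zero =>
    intro σ
    rw [yAux_zero, Pi.single_apply]
    simp only [eq_comm]
  | succ n ih =>
    intro σ
    rw [yAux_succ_def]
    simp only [Pi.add_apply, Finset.sum_apply]
    rw [Pi.single_apply]
    have : ∀ j ∈ T.children σ, T.yAux s n (s j) ρ = 0 := by
      intro j hj
      rw [ih (s j), if_neg]
      intro h
      exact not_mem_seqs_of_parentDp_none hρ j (h ▸ hs j)
    rw [Finset.sum_eq_zero this, add_zero]
    simp only [eq_comm]

lemma Y_orphan (hs : Valid s) {ρ : T.Seq} (hρ : T.parentDp ρ = none) (σ : T.Seq) :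
    T.Y s σ ρ = if σ = ρ then 1 else 0 := yAux_orphan hs hρ _ _

lemma Y_root (hs : Valid s) (σ : T.Seq) :
    T.Y s σ T.root = if σ = T.root then 1 else 0 := Y_orphan hs T.parentDp_root σ

/-- agreement: `yAux` only depends on the selection at deep decision points. -/
lemma yAux_agree {s' : T.Dp → T.Seq} (hs : Valid s) :
    ∀ n (σ : T.Seq), (∀ j, T.depth σ ≤ T.depth (T.parentSeq j) → s j = s' j) →
    T.yAux s n σ = T.yAux s' n σ := by
  intro n
  induction n with
  | zero => intro σ h; rw [yAux_zero, yAux_zero]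
  | succ n ih =>
    intro σ h
    rw [yAux_succ_def, yAux_succ_def]
    congr 1
    refine Finset.sum_congr rfl fun j hj => ?_
    have hpj : T.parentSeq j = σ := (T.mem_children σ j).1 hj
    have hsj : s j = s' j := h j (by rw [hpj])
    rw [← hsj]
    refine ih (s j) fun j' hj' => h j' ?_
    have : T.depth (s j) = T.depth σ + 1 := depth_sel hs hj
    omega

lemma Y_agree {s' : T.Dp → T.Seq} (hs : Valid s) (σ : T.Seq)
    (h : ∀ j, T.depth σ ≤ T.depth (T.parentSeq j) → s j = s' j) :
    T.Y s σ = T.Y s' σ := yAux_agree hs _ _ h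

/-- flow conservation -/
lemma yAux_flow (hs : Valid s) : ∀ n (σ : T.Seq), T.bigN ≤ T.depth σ + n → ∀ j : T.Dp,
    ∑ τ ∈ T.seqs j, T.yAux s n σ τ
      = T.yAux s n σ (T.parentSeq j) + (if σ ∈ T.seqs j then (1:ℝ) else 0) := by
  intro n
  induction n with
  | zero =>
    intro σ h j
    have hch := children_eq_empty (T := T) (σ := σ) (by omega)
    rw [yAux_zero]
    have h1 : ∑ τ ∈ T.seqs j, (Pi.single σ 1 : T.Seq → ℝ) τ
        = if σ ∈ T.seqs j then 1 else 0 := by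
      simp only [Pi.single_apply]
      rw [Finset.sum_ite_eq' (T.seqs j) σ (fun _ => (1:ℝ))]
    have hne : T.parentSeq j ≠ σ := by
      intro hc
      have : j ∈ T.children σ := (T.mem_children σ j).2 hc
      rw [hch] at this
      exact absurd this (Finset.notMem_empty j)
    rw [h1, Pi.single_apply, if_neg hne, zero_add]
  | succ n ih =>
    intro σ h j
    rw [yAux_succ_def]
    simp only [Pi.add_apply, Finset.sum_apply]
    rw [Finset.sum_add_distrib]
    have h1 : ∑ τ ∈ T.seqs j, (Pi.single σ 1 : T.Seq → ℝ) τ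
        = if σ ∈ T.seqs j then 1 else 0 := by
      simp only [Pi.single_apply]
      rw [Finset.sum_ite_eq' (T.seqs j) σ (fun _ => (1:ℝ))]
    rw [h1]
    rw [Finset.sum_comm]
    have h2 : ∀ j' ∈ T.children σ, ∑ τ ∈ T.seqs j, T.yAux s n (s j') τ
        = T.yAux s n (s j') (T.parentSeq j) + (if j' = j then (1:ℝ) else 0) := by
      intro j' hj'
      rw [ih (s j') (by rw [depth_sel hs hj']; omega) j]
      congr 1
      have : s j' ∈ T.seqs j ↔ j = j' := mem_seqs_iff (hs j')
      by_cases hc : j' = j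
      · rw [if_pos (this.2 hc.symm), if_pos hc]
      · rw [if_neg (fun hm => hc (this.1 hm).symm), if_neg hc]
    rw [Finset.sum_congr rfl h2, Finset.sum_add_distrib]
    have h3 : ∑ j' ∈ T.children σ, (if j' = j then (1:ℝ) else 0)
        = if j ∈ T.children σ then (1:ℝ) else 0 := Finset.sum_ite_eq' (T.children σ) j _
    rw [h3]
    have h4 : (if j ∈ T.children σ then (1:ℝ) else 0)
        = (Pi.single σ 1 : T.Seq → ℝ) (T.parentSeq j) := by
      rw [Pi.single_apply]
      by_cases hc : T.parentSeq j = σ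
      · rw [if_pos ((T.mem_children σ j).2 hc), if_pos hc]
      · rw [if_neg (fun hm => hc ((T.mem_children σ j).1 hm)), if_neg hc]
    rw [h4]
    ring

lemma Y_flow (hs : Valid s) (σ : T.Seq) (j : T.Dp) :
    ∑ τ ∈ T.seqs j, T.Y s σ τ
      = T.Y s σ (T.parentSeq j) + (if σ ∈ T.seqs j then (1:ℝ) else 0) :=
  yAux_flow hs _ _ (by have := depth_le_bigN σ; omega) j

end TFDP
namespace TFDP

open Finset

variable {T : TFDP} {s : T.Dp → T.Seq}

lemma valid_update (hs : Valid s) {j0 : T.Dp} {τ' : T.Seq} (hτ' : τ' ∈ T.seqs j0) :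
    Valid (Function.update s j0 τ') := by
  intro j
  by_cases h : j = j0
  · subst h; rw [Function.update_self]; exact hτ'
  · rw [Function.update_of_ne h]; exact hs j

lemma yAux_update (hs : Valid s) {j0 : T.Dp} {τ' : T.Seq} (hτ' : τ' ∈ T.seqs j0) :
    ∀ n (σ : T.Seq), T.bigN ≤ T.depth σ + n → ∀ ρ : T.Seq,
    T.yAux (Function.update s j0 τ') n σ ρ
      = T.yAux s n σ ρ
        + T.yAux s n σ (T.parentSeq j0) * (T.Y s τ' ρ - T.Y s (s j0) ρ) := by
  intro n
  induction n with
  | zero =>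
    intro σ h ρ
    have hch := children_eq_empty (T := T) (σ := σ) (by omega)
    have hne : T.parentSeq j0 ≠ σ := by
      intro hc
      have : j0 ∈ T.children σ := (T.mem_children σ j0).2 hc
      rw [hch] at this
      exact absurd this (Finset.notMem_empty j0)
    rw [yAux_zero, yAux_zero, Pi.single_apply σ (1:ℝ) (T.parentSeq j0),
      if_neg hne, zero_mul, add_zero]
  | succ n ih =>
    intro σ h ρ
    set s' := Function.update s j0 τ' with hs'def
    set Δ : ℝ := T.Y s τ' ρ - T.Y s (s j0) ρ with hΔ
    have key : ∀ j ∈ T.children σ,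
        T.yAux s' n (s' j) ρ
          = T.yAux s n (s j) ρ + T.yAux s n (s j) (T.parentSeq j0) * Δ
            + (if j = j0 then Δ else 0) := by
      intro j hj
      by_cases hc : j = j0
      · subst hc
        have hpj : T.parentSeq j = σ := (T.mem_children σ j).1 hj
        have hdτ' : T.depth τ' = T.depth σ + 1 := by
          rw [depth_in_seqs hτ', hpj]
        have hfuel : T.bigN ≤ T.depth τ' + n := by omega
        have hag : T.yAux s' n τ' = T.yAux s n τ' := by
          refine (yAux_agree hs n τ' fun j'' hj'' => ?_).symm
          rw [hs'def, Function.update_of_ne]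
          intro hcc
          subst hcc
          rw [hpj] at hj''
          omega
        have h1 : T.yAux s' n (s' j) ρ = T.Y s τ' ρ := by
          rw [hs'def, Function.update_self, hag, yAux_eq_Y hs n τ' hfuel]
        have h2 : T.yAux s n (s j) ρ = T.Y s (s j) ρ := by
          rw [yAux_eq_Y hs n (s j) (by rw [depth_sel hs hj]; omega)]
        have h3 : T.yAux s n (s j) (T.parentSeq j) = 0 := by
          refine yAux_support hs n _ _ ?_
          rw [depth_sel hs hj, hpj]
          omega
        rw [h1, h2, h3, if_pos rfl, zero_mul, add_zero, hΔ]
        ring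
      · rw [hs'def, Function.update_of_ne hc, ← hs'def,
          ih (s j) (by rw [depth_sel hs hj]; omega) ρ, if_neg hc, add_zero]
    rw [yAux_succ_def, yAux_succ_def]
    simp only [Pi.add_apply, Finset.sum_apply]
    rw [Finset.sum_congr rfl key, Finset.sum_add_distrib, Finset.sum_add_distrib]
    have h4 : ∑ j ∈ T.children σ, (if j = j0 then Δ else 0)
        = (if j0 ∈ T.children σ then Δ else 0) := Finset.sum_ite_eq' (T.children σ) j0 _
    have h5 : (Pi.single σ 1 : T.Seq → ℝ) (T.parentSeq j0)
        = (if j0 ∈ T.children σ then (1:ℝ) else 0) := by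
      rw [Pi.single_apply]
      by_cases hc : T.parentSeq j0 = σ
      · rw [if_pos hc, if_pos ((T.mem_children σ j0).2 hc)]
      · rw [if_neg hc, if_neg (fun hm => hc ((T.mem_children σ j0).1 hm))]
    rw [h4, h5, ← Finset.sum_mul]
    by_cases hc : j0 ∈ T.children σ
    · rw [if_pos hc, if_pos hc]; ring
    · rw [if_neg hc, if_neg hc]; ring

lemma Y_update (hs : Valid s) {j0 : T.Dp} {τ' : T.Seq} (hτ' : τ' ∈ T.seqs j0)
    (σ ρ : T.Seq) :
    T.Y (Function.update s j0 τ') σ ρ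
      = T.Y s σ ρ + T.Y s σ (T.parentSeq j0) * (T.Y s τ' ρ - T.Y s (s j0) ρ) :=
  yAux_update hs hτ' T.bigN σ (by have := depth_le_bigN σ; omega) ρ

lemma yAux_ge (hs : Valid s) {j0 : T.Dp} {σ0 : T.Seq} (h0 : σ0 ∈ T.seqs j0)
    (hsel : s j0 = σ0) :
    ∀ n (ρ : T.Seq), T.bigN ≤ T.depth ρ + n →
    T.yAux s n ρ (T.parentSeq j0) ≤ T.yAux s n ρ σ0 := by
  intro n
  induction n with
  | zero =>
    intro ρ h
    have hch := children_eq_empty (T := T) (σ := ρ) (by omega)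
    have hne : T.parentSeq j0 ≠ ρ := by
      intro hc
      have : j0 ∈ T.children ρ := (T.mem_children ρ j0).2 hc
      rw [hch] at this
      exact absurd this (Finset.notMem_empty j0)
    rw [yAux_zero, Pi.single_apply, Pi.single_apply, if_neg hne]
    split <;> norm_num
  | succ n ih =>
    intro ρ h
    rw [yAux_succ_def]
    simp only [Pi.add_apply, Finset.sum_apply]
    by_cases hc : T.parentSeq j0 = ρ
    · have hj0 : j0 ∈ T.children ρ := (T.mem_children ρ j0).2 hc
      have hL : (Pi.single ρ 1 : T.Seq → ℝ) (T.parentSeq j0)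
          + ∑ j ∈ T.children ρ, T.yAux s n (s j) (T.parentSeq j0) = 1 := by
        rw [Pi.single_apply, if_pos hc]
        rw [Finset.sum_eq_zero, add_zero]
        intro j hj
        refine yAux_support hs n _ _ ?_
        rw [depth_sel hs hj, hc]
        omega
      rw [hL]
      have h1 : T.yAux s n (s j0) σ0 = 1 := by rw [hsel, yAux_self hs]
      have h2 : T.yAux s n (s j0) σ0 ≤ ∑ j ∈ T.children ρ, T.yAux s n (s j) σ0 :=
        Finset.single_le_sum (fun j _ => yAux_nonneg hs n (s j) σ0) hj0
      have h3 : (0:ℝ) ≤ (Pi.single ρ 1 : T.Seq → ℝ) σ0 := by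
        rw [Pi.single_apply]; split <;> norm_num
      linarith
    · have h1 : (Pi.single ρ 1 : T.Seq → ℝ) (T.parentSeq j0)
          ≤ (Pi.single ρ 1 : T.Seq → ℝ) σ0 := by
        rw [Pi.single_apply, Pi.single_apply, if_neg hc]
        split <;> norm_num
      have h2 : ∑ j ∈ T.children ρ, T.yAux s n (s j) (T.parentSeq j0)
          ≤ ∑ j ∈ T.children ρ, T.yAux s n (s j) σ0 := by
        refine Finset.sum_le_sum fun j hj => ih (s j) ?_
        rw [depth_sel hs hj]; omega
      linarith

lemma Y_ge (hs : Valid s) {j0 : T.Dp} {σ0 : T.Seq} (h0 : σ0 ∈ T.seqs j0)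
    (hsel : s j0 = σ0) (ρ : T.Seq) :
    T.Y s ρ (T.parentSeq j0) ≤ T.Y s ρ σ0 :=
  yAux_ge hs h0 hsel T.bigN ρ (by have := depth_le_bigN ρ; omega)

lemma reach : ∀ k (σ : T.Seq), T.depth σ ≤ k → ∀ s : T.Dp → T.Seq, Valid s →
    ∃ (ρ : T.Seq) (s' : T.Dp → T.Seq), Valid s' ∧ T.parentDp ρ = none ∧
      1 ≤ T.Y s' ρ σ ∧ ∀ j, T.depth σ ≤ T.depth (T.parentSeq j) → s' j = s j := by
  intro k
  induction k with
  | zero =>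
    intro σ hσ s hs
    rcases hDp : T.parentDp σ with _ | j0
    · exact ⟨σ, s, hs, hDp, le_of_eq (Y_self hs σ).symm, fun j _ => rfl⟩
    · exfalso
      have hm : σ ∈ T.seqs j0 := (T.parentDp_spec σ j0).1 hDp
      have := depth_in_seqs hm
      omega
  | succ k ih =>
    intro σ hσ s hs
    rcases hDp : T.parentDp σ with _ | j0
    · exact ⟨σ, s, hs, hDp, le_of_eq (Y_self hs σ).symm, fun j _ => rfl⟩
    · have hm : σ ∈ T.seqs j0 := (T.parentDp_spec σ j0).1 hDp
      have hd : T.depth σ = T.depth (T.parentSeq j0) + 1 := depth_in_seqs hm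
      obtain ⟨ρ, s'', hs'', hρ, hY, hag⟩ := ih (T.parentSeq j0) (by omega) s hs
      refine ⟨ρ, Function.update s'' j0 σ, valid_update hs'' hm, hρ, ?_, ?_⟩
      · have h1 : T.Y (Function.update s'' j0 σ) ρ (T.parentSeq j0)
            = T.Y s'' ρ (T.parentSeq j0) := by
          rw [Y_update hs'' hm]
          have hz1 : T.Y s'' σ (T.parentSeq j0) = 0 := Y_support hs'' _ _ (by omega)
          have hz2 : T.Y s'' (s'' j0) (T.parentSeq j0) = 0 := by
            refine Y_support hs'' _ _ ?_
            rw [depth_in_seqs (hs'' j0)]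
            omega
          rw [hz1, hz2]
          ring
        have h2 := Y_ge (valid_update hs'' hm) hm (Function.update_self j0 σ s'') ρ
        rw [h1] at h2
        exact le_trans hY h2
      · intro j hj
        by_cases hc : j = j0
        · exfalso; subst hc; omega
        · rw [Function.update_of_ne hc]
          exact hag j (by omega)

lemma Y_root_mem (hs : Valid s) : T.Y s T.root ∈ T.poly := by
  refine ⟨fun σ => Y_nonneg hs _ _, ?_, ?_⟩
  · rw [Y_root hs, if_pos rfl]
  · intro j
    rw [Y_flow hs T.root j, if_neg (root_not_mem_seqs j), add_zero]

lemma Y_root_add_orphan_mem (hs : Valid s) {ρ : T.Seq} (hρ : T.parentDp ρ = none)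
    (hne : ρ ≠ T.root) {t : ℝ} (ht : 0 ≤ t) :
    (T.Y s T.root + t • T.Y s ρ) ∈ T.poly := by
  refine ⟨fun σ => ?_, ?_, ?_⟩
  · have h1 := Y_nonneg hs T.root σ
    have h2 := Y_nonneg hs ρ σ
    simp only [Pi.add_apply, Pi.smul_apply, smul_eq_mul]
    positivity
  · simp only [Pi.add_apply, Pi.smul_apply, smul_eq_mul]
    rw [Y_root hs, Y_root hs, if_pos rfl, if_neg hne]
    ring
  · intro j
    simp only [Pi.add_apply, Pi.smul_apply, smul_eq_mul]
    rw [Finset.sum_add_distrib, Y_flow hs T.root j, ← Finset.mul_sum, Y_flow hs ρ j,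
      if_neg (root_not_mem_seqs j), if_neg (not_mem_seqs_of_parentDp_none hρ j)]
    ring

end TFDP
namespace TFDP

open Finset

variable (T : TFDP)

noncomputable def VAux (g : T.Seq → ℝ) : ℕ → T.Seq → ℝ
  | 0, σ => g σ
  | n+1, σ => g σ + ∑ j ∈ T.children σ, (T.seqs j).inf' (T.seqs_nonempty j) (VAux g n)

lemma VAux_zero (g : T.Seq → ℝ) (σ : T.Seq) : T.VAux g 0 σ = g σ := rfl

lemma VAux_succ_def (g : T.Seq → ℝ) (n : ℕ) (σ : T.Seq) :
    T.VAux g (n+1) σ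
      = g σ + ∑ j ∈ T.children σ, (T.seqs j).inf' (T.seqs_nonempty j) (T.VAux g n) := rfl

noncomputable def V (g : T.Seq → ℝ) (σ : T.Seq) : ℝ := T.VAux g T.bigN σ

noncomputable def vmin (g : T.Seq → ℝ) (j : T.Dp) : ℝ :=
  (T.seqs j).inf' (T.seqs_nonempty j) (T.V g)

noncomputable def pick (g : T.Seq → ℝ) (j : T.Dp) : T.Seq :=
  (Finset.exists_mem_eq_inf' (T.seqs_nonempty j) (T.V g)).choose

variable {T}
variable {g : T.Seq → ℝ}

lemma pick_mem (j : T.Dp) : T.pick g j ∈ T.seqs j :=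
  (Finset.exists_mem_eq_inf' (T.seqs_nonempty j) (T.V g)).choose_spec.1

lemma pick_valid : Valid (T.pick g) := fun j => pick_mem j

lemma V_pick (j : T.Dp) : T.V g (T.pick g j) = T.vmin g j :=
  ((Finset.exists_mem_eq_inf' (T.seqs_nonempty j) (T.V g)).choose_spec.2).symm

lemma vmin_le {j : T.Dp} {σ : T.Seq} (h : σ ∈ T.seqs j) : T.vmin g j ≤ T.V g σ :=
  Finset.inf'_le _ h

lemma VAux_succ : ∀ n (σ : T.Seq), T.bigN ≤ T.depth σ + n →
    T.VAux g (n+1) σ = T.VAux g n σ := by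
  intro n
  induction n with
  | zero =>
    intro σ h
    rw [VAux_succ_def, VAux_zero, children_eq_empty (by omega), Finset.sum_empty, add_zero]
  | succ n ih =>
    intro σ h
    rw [VAux_succ_def, VAux_succ_def]
    congr 1
    refine Finset.sum_congr rfl fun j hj => Finset.inf'_congr _ rfl fun τ hτ => ?_
    exact ih τ (by rw [depth_child hj hτ]; omega)

lemma VAux_eq_V : ∀ n (σ : T.Seq), T.bigN ≤ T.depth σ + n → T.VAux g n σ = T.V g σ := by
  have climb : ∀ k n (σ : T.Seq), T.bigN ≤ T.depth σ + n →
      T.VAux g (n+k) σ = T.VAux g n σ := by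
    intro k
    induction k with
    | zero => intro n σ h; rfl
    | succ k ih =>
      intro n σ h
      have : n + (k+1) = (n+k) + 1 := by omega
      rw [this, VAux_succ _ _ (by omega), ih n σ h]
  intro n σ h
  have h1 : T.VAux g (n + T.bigN) σ = T.VAux g n σ := climb _ _ _ h
  have h2 : T.VAux g (T.bigN + n) σ = T.VAux g T.bigN σ :=
    climb _ _ _ (by have := depth_le_bigN σ; omega)
  rw [V, ← h2, show T.bigN + n = n + T.bigN by omega, h1]

lemma V_rec (σ : T.Seq) : T.V g σ = g σ + ∑ j ∈ T.children σ, T.vmin g j := by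
  have h1 : T.VAux g (T.bigN + 1) σ = T.V g σ :=
    VAux_eq_V _ _ (by have := depth_le_bigN σ; omega)
  rw [← h1, VAux_succ_def]
  rfl

/-- The pairing of `g` with the greedy pure strategy realizes the value `V`. -/
lemma pairing_pick : ∀ n (σ : T.Seq), T.bigN ≤ T.depth σ + n →
    ∑ τ : T.Seq, g τ * T.yAux (T.pick g) n σ τ = T.V g σ := by
  intro n
  induction n with
  | zero =>
    intro σ h
    have hch := children_eq_empty (T := T) (σ := σ) (by omega)
    rw [V_rec σ, hch, Finset.sum_empty, add_zero]
    simp only [yAux_zero, Pi.single_apply, mul_ite, mul_one, mul_zero]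
    rw [Finset.sum_ite_eq' Finset.univ σ g, if_pos (Finset.mem_univ σ)]
  | succ n ih =>
    intro σ h
    simp only [yAux_succ_def, Pi.add_apply, Finset.sum_apply, mul_add, Finset.mul_sum]
    rw [Finset.sum_add_distrib]
    have h1 : ∑ τ : T.Seq, g τ * (Pi.single σ 1 : T.Seq → ℝ) τ = g σ := by
      simp only [Pi.single_apply, mul_ite, mul_one, mul_zero]
      rw [Finset.sum_ite_eq' Finset.univ σ g, if_pos (Finset.mem_univ σ)]
    rw [h1, Finset.sum_comm]
    have h2 : ∀ j ∈ T.children σ,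
        ∑ τ : T.Seq, g τ * T.yAux (T.pick g) n (T.pick g j) τ = T.vmin g j := by
      intro j hj
      rw [ih (T.pick g j) (by rw [depth_sel pick_valid hj]; omega), V_pick]
    rw [Finset.sum_congr rfl h2, V_rec σ]

lemma pairing_pick_Y (σ : T.Seq) :
    ∑ τ : T.Seq, g τ * T.Y (T.pick g) σ τ = T.V g σ :=
  pairing_pick T.bigN σ (by have := depth_le_bigN σ; omega)

/-- children of `σ` as a filter. -/
lemma children_eq_filter (σ : T.Seq) :
    T.children σ = Finset.univ.filter (fun j => T.parentSeq j = σ) := by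
  ext j
  simp [T.mem_children, Finset.mem_filter]

lemma sum_children_eq (w : T.Dp → ℝ) (x : T.Seq → ℝ) :
    ∑ σ : T.Seq, (∑ j ∈ T.children σ, w j) * x σ
      = ∑ j : T.Dp, w j * x (T.parentSeq j) := by
  rw [← Finset.sum_fiberwise_of_maps_to (g := T.parentSeq)
    (fun j _ => Finset.mem_univ (T.parentSeq j)) (fun j => w j * x (T.parentSeq j))]
  refine Finset.sum_congr rfl fun σ _ => ?_
  rw [Finset.sum_mul, children_eq_filter]
  refine Finset.sum_congr rfl fun j hj => ?_
  rw [Finset.mem_filter] at hj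
  rw [hj.2]

lemma seqs_eq_filter (j : T.Dp) :
    T.seqs j = Finset.univ.filter (fun σ => T.parentDp σ = some j) := by
  ext σ
  simp [← T.parentDp_spec, Finset.mem_filter]

lemma sum_parentDp_eq (w : T.Dp → ℝ) (x : T.Seq → ℝ)
    (hx : ∀ j, x (T.parentSeq j) = ∑ σ ∈ T.seqs j, x σ) :
    ∑ σ : T.Seq, ((T.parentDp σ).elim 0 w) * x σ = ∑ j : T.Dp, w j * x (T.parentSeq j) := by
  rw [← Finset.sum_fiberwise_of_maps_to (g := T.parentDp)
    (fun σ _ => Finset.mem_univ (T.parentDp σ)) (fun σ => ((T.parentDp σ).elim 0 w) * x σ)]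
  rw [Fintype.sum_option]
  have h0 : ∑ σ ∈ Finset.univ.filter (fun σ => T.parentDp σ = none),
      ((T.parentDp σ).elim 0 w) * x σ = 0 := by
    refine Finset.sum_eq_zero fun σ hσ => ?_
    rw [Finset.mem_filter] at hσ
    rw [hσ.2]
    simp
  rw [h0, zero_add]
  refine Finset.sum_congr rfl fun j _ => ?_
  rw [hx j, ← seqs_eq_filter, Finset.mul_sum]
  refine Finset.sum_congr rfl fun σ hσ => ?_
  rw [(T.parentDp_spec σ j).2 hσ]
  simp [mul_comm]

end TFDP
namespace TFDP

open Finset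

variable {T : TFDP} {s : T.Dp → T.Seq} {d : T.Seq → ℝ}

lemma D_single (d : T.Seq → ℝ) (σ : T.Seq) :
    ∑ τ : T.Seq, d τ * (Pi.single σ 1 : T.Seq → ℝ) τ = d σ := by
  simp only [Pi.single_apply, mul_ite, mul_one, mul_zero]
  rw [Finset.sum_ite_eq' Finset.univ σ d, if_pos (Finset.mem_univ σ)]

lemma D_Y_rec (d : T.Seq → ℝ) (hs : Valid s) (σ : T.Seq) :
    ∑ τ : T.Seq, d τ * T.Y s σ τ
      = d σ + ∑ j ∈ T.children σ, ∑ τ : T.Seq, d τ * T.Y s (s j) τ := by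
  have h : ∀ τ, T.Y s σ τ
      = (Pi.single σ 1 : T.Seq → ℝ) τ + ∑ j ∈ T.children σ, T.Y s (s j) τ := by
    intro τ
    rw [Y_rec hs σ]
    simp [Pi.add_apply, Finset.sum_apply]
  calc ∑ τ : T.Seq, d τ * T.Y s σ τ
      = ∑ τ : T.Seq, (d τ * (Pi.single σ 1 : T.Seq → ℝ) τ
          + ∑ j ∈ T.children σ, d τ * T.Y s (s j) τ) := by
        refine Finset.sum_congr rfl fun τ _ => ?_
        rw [h τ, mul_add, Finset.mul_sum]
    _ = d σ + ∑ j ∈ T.children σ, ∑ τ : T.Seq, d τ * T.Y s (s j) τ := by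
        rw [Finset.sum_add_distrib, D_single, Finset.sum_comm]

lemma D_zero_orphan (hD : ∀ x ∈ T.poly, ∑ τ : T.Seq, d τ * x τ = 0) (hs : Valid s)
    {ρ : T.Seq} (hρ : T.parentDp ρ = none) :
    ∑ τ : T.Seq, d τ * T.Y s ρ τ = 0 := by
  by_cases hne : ρ = T.root
  · subst hne
    exact hD _ (Y_root_mem hs)
  · have h1 := hD _ (Y_root_mem hs)
    have h2 := hD _ (Y_root_add_orphan_mem hs hρ hne (t := 1) zero_le_one)
    simp only [Pi.add_apply, Pi.smul_apply, smul_eq_mul, one_mul, mul_add,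
      Finset.sum_add_distrib] at h2
    linarith

lemma D_swap (hD : ∀ x ∈ T.poly, ∑ τ : T.Seq, d τ * x τ = 0) (hs : Valid s)
    {j : T.Dp} {τa τb : T.Seq} (ha : τa ∈ T.seqs j) (hb : τb ∈ T.seqs j) :
    ∑ τ : T.Seq, d τ * T.Y s τa τ = ∑ τ : T.Seq, d τ * T.Y s τb τ := by
  obtain ⟨ρ, s', hs', hρ, hY1, hagr⟩ :=
    reach (T.depth (T.parentSeq j)) (T.parentSeq j) le_rfl s hs
  have hda : T.depth τa = T.depth (T.parentSeq j) + 1 := depth_in_seqs ha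
  have hdb : T.depth τb = T.depth (T.parentSeq j) + 1 := depth_in_seqs hb
  set s1 := Function.update s' j τa with hs1def
  have hs1 : Valid s1 := valid_update hs' ha
  have hs1j : s1 j = τa := Function.update_self j τa s'
  have hcoef : 1 ≤ T.Y s1 ρ (T.parentSeq j) := by
    rw [hs1def, Y_update hs' ha ρ (T.parentSeq j)]
    have hz1 : T.Y s' τa (T.parentSeq j) = 0 := Y_support hs' _ _ (by omega)
    have hz2 : T.Y s' (s' j) (T.parentSeq j) = 0 := by
      refine Y_support hs' _ _ ?_
      rw [depth_in_seqs (hs' j)]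
      omega
    rw [hz1, hz2]
    simpa using hY1
  have h2 : ∀ χ, T.Y (Function.update s1 j τb) ρ χ
      = T.Y s1 ρ χ + T.Y s1 ρ (T.parentSeq j) * (T.Y s1 τb χ - T.Y s1 τa χ) := by
    intro χ
    rw [Y_update hs1 hb ρ χ, hs1j]
  have e1 : ∑ τ : T.Seq, d τ * T.Y s1 ρ τ = 0 := D_zero_orphan hD hs1 hρ
  have e2 : ∑ τ : T.Seq, d τ * T.Y (Function.update s1 j τb) ρ τ = 0 :=
    D_zero_orphan hD (valid_update hs1 hb) hρ
  have e3 : ∑ τ : T.Seq, d τ * T.Y (Function.update s1 j τb) ρ τ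
      = ∑ τ : T.Seq, d τ * T.Y s1 ρ τ
        + T.Y s1 ρ (T.parentSeq j)
          * (∑ τ : T.Seq, d τ * T.Y s1 τb τ - ∑ τ : T.Seq, d τ * T.Y s1 τa τ) := by
    have expand : ∀ τ : T.Seq, d τ * T.Y (Function.update s1 j τb) ρ τ
        = d τ * T.Y s1 ρ τ
          + T.Y s1 ρ (T.parentSeq j) * (d τ * T.Y s1 τb τ)
          - T.Y s1 ρ (T.parentSeq j) * (d τ * T.Y s1 τa τ) := by
      intro τ; rw [h2 τ]; ring
    rw [Finset.sum_congr rfl fun τ _ => expand τ, Finset.sum_sub_distrib,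
      Finset.sum_add_distrib, ← Finset.mul_sum, ← Finset.mul_sum]
    ring
  have e4 : ∑ τ : T.Seq, d τ * T.Y s1 τa τ = ∑ τ : T.Seq, d τ * T.Y s1 τb τ := by
    rw [e2, e1, zero_add] at e3
    have hne : T.Y s1 ρ (T.parentSeq j) ≠ 0 := by linarith
    have := (mul_eq_zero.1 e3.symm).resolve_left hne
    linarith
  have hYa : T.Y s1 τa = T.Y s τa := by
    refine (Y_agree hs τa fun j'' hj'' => ?_).symm
    have hne : j'' ≠ j := by intro hc; subst hc; omega
    rw [hs1def, Function.update_of_ne hne]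
    exact (hagr j'' (by omega)).symm
  have hYb : T.Y s1 τb = T.Y s τb := by
    refine (Y_agree hs τb fun j'' hj'' => ?_).symm
    have hne : j'' ≠ j := by intro hc; subst hc; omega
    rw [hs1def, Function.update_of_ne hne]
    exact (hagr j'' (by omega)).symm
  rw [← hYa, ← hYb]
  exact e4

end TFDP

/-- Lemma 1: every linear functional nonnegative on the sequence-form
polytope has a unique representation `c` that is entrywise nonnegative and has a zero
entry among each decision point's actions. -/
theorem canonical_representation (T : TFDP) (f : (T.Seq → ℝ) →ₗ[ℝ] ℝ)
    (hf : ∀ x ∈ T.poly, 0 ≤ f x) :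
    ∃! c : T.Seq → ℝ,
      (∀ x ∈ T.poly, f x = ∑ σ : T.Seq, c σ * x σ)
      ∧ (∀ σ, 0 ≤ c σ)
      ∧ (∀ j : T.Dp, ∃ σ ∈ T.seqs j, c σ = 0) := by
  classical
  open TFDP Finset in
  set g : T.Seq → ℝ := fun σ => f (Pi.single σ 1) with hg
  have frepr : ∀ x : T.Seq → ℝ, f x = ∑ τ : T.Seq, g τ * x τ := by
    intro x
    conv_lhs => rw [← Finset.univ_sum_single x]
    rw [map_sum]
    refine Finset.sum_congr rfl fun τ _ => ?_
    have h1 : Pi.single τ (x τ) = x τ • (Pi.single τ 1 : T.Seq → ℝ) := by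
      rw [← Pi.single_smul, smul_eq_mul, mul_one]
    rw [h1, map_smul, smul_eq_mul, mul_comm]
  set c : T.Seq → ℝ := fun σ => T.V g σ - (T.parentDp σ).elim 0 (T.vmin g) with hc
  -- (1) representation on the polytope
  have hrep : ∀ x ∈ T.poly, f x = ∑ σ : T.Seq, c σ * x σ := by
    intro x hx
    rw [frepr x]
    have L : ∑ σ : T.Seq, g σ * x σ
        = ∑ σ : T.Seq, T.V g σ * x σ - ∑ j : T.Dp, T.vmin g j * x (T.parentSeq j) := by
      rw [← sum_children_eq (T.vmin g) x, ← Finset.sum_sub_distrib]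
      refine Finset.sum_congr rfl fun σ _ => ?_
      have := V_rec (g := g) σ
      have hgs : g σ = T.V g σ - ∑ j ∈ T.children σ, T.vmin g j := by rw [this]; ring
      rw [hgs]
      ring
    have R : ∑ σ : T.Seq, c σ * x σ
        = ∑ σ : T.Seq, T.V g σ * x σ - ∑ j : T.Dp, T.vmin g j * x (T.parentSeq j) := by
      rw [← sum_parentDp_eq (T.vmin g) x hx.2.2, ← Finset.sum_sub_distrib]
      refine Finset.sum_congr rfl fun σ _ => ?_
      rw [hc]
      ring
    rw [L, R]
  -- nonnegativity of V at root and orphans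
  have hVroot : 0 ≤ T.V g T.root := by
    have h1 := hf _ (Y_root_mem (pick_valid (g := g)))
    rw [frepr] at h1
    rw [pairing_pick_Y] at h1
    exact h1
  have hVorphan : ∀ ρ : T.Seq, T.parentDp ρ = none → ρ ≠ T.root → 0 ≤ T.V g ρ := by
    intro ρ hρ hne
    by_contra hneg
    push_neg at hneg
    set t : ℝ := (T.V g T.root + 1) / (-(T.V g ρ)) with ht
    have htpos : 0 ≤ t := by
      apply div_nonneg
      · linarith
      · linarith
    have hmem := Y_root_add_orphan_mem (pick_valid (g := g)) hρ hne htpos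
    have h1 := hf _ hmem
    rw [frepr] at h1
    have h2 : ∑ τ : T.Seq, g τ * (T.Y (T.pick g) T.root + t • T.Y (T.pick g) ρ) τ
        = T.V g T.root + t * T.V g ρ := by
      simp only [Pi.add_apply, Pi.smul_apply, smul_eq_mul, mul_add, Finset.sum_add_distrib]
      rw [pairing_pick_Y]
      congr 1
      rw [← pairing_pick_Y (g := g) (σ := ρ), Finset.mul_sum]
      exact Finset.sum_congr rfl fun τ _ => by ring
    rw [h2] at h1
    have hBne : -T.V g ρ ≠ 0 := ne_of_gt (by linarith)
    have h3 : t * T.V g ρ = -(T.V g T.root + 1) := by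
      calc t * T.V g ρ = -((T.V g T.root + 1) / (-T.V g ρ) * (-T.V g ρ)) := by rw [ht]; ring
        _ = -(T.V g T.root + 1) := by rw [div_mul_cancel₀ _ hBne]
    rw [h3] at h1
    linarith
  -- (2) nonnegativity of c
  have hnn : ∀ σ, 0 ≤ c σ := by
    intro σ
    show 0 ≤ T.V g σ - (T.parentDp σ).elim 0 (T.vmin g)
    rcases hDp : T.parentDp σ with _ | j
    · by_cases hne : σ = T.root
      · subst hne; simpa using hVroot
      · simpa using hVorphan σ hDp hne
    · have hm : σ ∈ T.seqs j := (T.parentDp_spec σ j).1 hDp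
      have := vmin_le (g := g) hm
      simp only [Option.elim]
      linarith
  -- (3) a zero action in each decision point
  have hzero : ∀ j : T.Dp, ∃ σ ∈ T.seqs j, c σ = 0 := by
    intro j
    refine ⟨T.pick g j, pick_mem j, ?_⟩
    show T.V g (T.pick g j) - (T.parentDp (T.pick g j)).elim 0 (T.vmin g) = 0
    have hDp : T.parentDp (T.pick g j) = some j := (T.parentDp_spec _ j).2 (pick_mem j)
    rw [hDp]
    simp only [Option.elim]
    rw [V_pick]
    ring
  refine ⟨c, ⟨hrep, hnn, hzero⟩, ?_⟩
  -- uniqueness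
  rintro c1 ⟨h1rep, h1nn, h1zero⟩
  set d : T.Seq → ℝ := fun τ => c1 τ - c τ with hd
  have hD : ∀ x ∈ T.poly, ∑ τ : T.Seq, d τ * x τ = 0 := by
    intro x hx
    have e1 := h1rep x hx
    have e2 := hrep x hx
    have : ∑ τ : T.Seq, d τ * x τ
        = ∑ τ : T.Seq, c1 τ * x τ - ∑ τ : T.Seq, c τ * x τ := by
      rw [← Finset.sum_sub_distrib]
      exact Finset.sum_congr rfl fun τ _ => by rw [hd]; ring
    rw [this, ← e1, ← e2]
    ring
  set sdef : T.Dp → T.Seq := fun j => (T.seqs_nonempty j).choose with hsdefdef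
  have hsdef : Valid sdef := fun j => (T.seqs_nonempty j).choose_spec
  have main : ∀ m : ℕ,
      (∀ σ, T.bigN ≤ T.depth σ + m → ∀ s, Valid s →
        ∑ τ : T.Seq, d τ * T.Y s σ τ = d σ) →
      ∀ σ, T.bigN ≤ T.depth σ + m → ∀ s, Valid s →
        ∑ τ : T.Seq, d τ * T.Y s σ τ = 0 := by
    intro m hU σ hfuel s hs
    rw [hU σ hfuel s hs]
    rcases hDp : T.parentDp σ with _ | j
    · rw [← hU σ hfuel sdef hsdef]
      exact D_zero_orphan hD hsdef hDp
    · have hm : σ ∈ T.seqs j := (T.parentDp_spec σ j).1 hDp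
      obtain ⟨τ0, hτ0, hcτ0⟩ := h1zero j
      obtain ⟨τ1, hτ1, hcτ1⟩ := hzero j
      have hdepth : ∀ τ, τ ∈ T.seqs j → T.depth τ = T.depth σ := by
        intro τ hτ
        rw [depth_in_seqs hτ, depth_in_seqs hm]
      have hUτ : ∀ τ, τ ∈ T.seqs j → ∑ τ' : T.Seq, d τ' * T.Y sdef τ τ' = d τ := by
        intro τ hτ
        exact hU τ (by rw [hdepth τ hτ]; omega) sdef hsdef
      have e0 : d τ0 = d σ := by
        rw [← hUτ τ0 hτ0, ← hUτ σ hm]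
        exact D_swap hD hsdef hτ0 hm
      have e1 : d τ1 = d σ := by
        rw [← hUτ τ1 hτ1, ← hUτ σ hm]
        exact D_swap hD hsdef hτ1 hm
      have s0 : d τ0 ≤ 0 := by
        have := hnn τ0
        show c1 τ0 - c τ0 ≤ 0
        rw [hcτ0]
        linarith
      have s1 : 0 ≤ d τ1 := by
        have := h1nn τ1
        show 0 ≤ c1 τ1 - c τ1
        rw [hcτ1]
        linarith
      linarith [e0, e1, s0, s1]
  have key : ∀ m : ℕ, ∀ σ, T.bigN ≤ T.depth σ + m → ∀ s, Valid s →
      ∑ τ : T.Seq, d τ * T.Y s σ τ = 0 := by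
    intro m
    induction m with
    | zero =>
      refine main 0 ?_
      intro σ hfuel s hs
      rw [D_Y_rec d hs σ, children_eq_empty (by omega), Finset.sum_empty, add_zero]
    | succ m ih =>
      refine main (m+1) ?_
      intro σ hfuel s hs
      rw [D_Y_rec d hs σ]
      rw [Finset.sum_eq_zero, add_zero]
      intro j hj
      exact ih (s j) (by rw [depth_sel hs hj]; omega) s hs
  have hdzero : ∀ σ, d σ = 0 := by
    intro σ
    have h1 : ∑ τ : T.Seq, d τ * T.Y sdef σ τ = d σ := by
      rw [D_Y_rec d hsdef σ, Finset.sum_eq_zero, add_zero]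
      intro j hj
      exact key T.bigN (sdef j) (by have := depth_le_bigN (sdef j); omega) sdef hsdef
    rw [← h1]
    exact key T.bigN σ (by have := depth_le_bigN σ; omega) sdef hsdef
  funext σ
  have h2 : c1 σ - c σ = 0 := hdzero σ
  linarith
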